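/- Let r ∈ ℕ, r ≥ 1, and let L be a loss function satisfying Assumptions 1, 2 and 3. Let g : {r, r+1, …} → (0,∞) be such that Ω := lim_{n→∞} n·g(n) exists, is finite and nonzero. Then the risk η(p) = Σ_{n=r}^∞ f(n) L(g(n)/p) of the non-randomized estimator p̂ = g(N) converges as p → 0⁺, and lim_{p→0⁺} η(p) = η̄(Ω) = ∫₀^∞ φ(ν) L(Ω/ν) dν. -/

import Mathlib

open MeasureTheory Filter Set Topology Asymptotics
open scoped ENNReal NNReal BigOperators

/-- `φ(ν) = ν^(r-1) e^(-ν) / (r-1)!`. -/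
noncomputable def phi (r : ℕ) (ν : ℝ) : ℝ :=
  ν ^ (r - 1) * Real.exp (-ν) / (Nat.factorial (r - 1))

/-- Probability function of inverse binomial sampling:
`f(n) = ((n-1)(n-2)⋯(n-r+1)/(r-1)!) p^r (1-p)^(n-r)`. -/
noncomputable def fpmf (r : ℕ) (p : ℝ) (n : ℕ) : ℝ :=
  (∏ i ∈ Finset.Icc 1 (r - 1), ((n : ℝ) - (i : ℝ))) / (Nat.factorial (r - 1))
    * p ^ r * (1 - p) ^ (n - r)

/-- Assumption 1: bounded variation on every compact subinterval of `(0,∞)`. -/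
def Assumption1 (L : ℝ → ℝ) : Prop :=
  ∀ x₁ x₂ : ℝ, 0 < x₁ → x₁ < x₂ → BoundedVariationOn L (Set.Icc x₁ x₂)

/-- Assumption 2: finitely many discontinuities in every compact subinterval of `(0,∞)`. -/
def Assumption2 (L : ℝ → ℝ) : Prop :=
  ∀ x₁ x₂ : ℝ, 0 < x₁ → x₁ < x₂ →
    {x ∈ Set.Icc x₁ x₂ | ¬ ContinuousWithinAt L (Set.Ioi 0) x}.Finite

/-- Assumption 3: `L(x) = O(x^K)` as `x → 0⁺` for some `K ∈ ℝ`, and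
`L(x) = O(x^K')` as `x → ∞` for some `K' < r`. -/
def Assumption3 (r : ℕ) (L : ℝ → ℝ) : Prop :=
  (∃ K : ℝ, L =O[𝓝[>] (0 : ℝ)] fun x : ℝ => x ^ K) ∧
  (∃ K' : ℝ, K' < (r : ℝ) ∧ L =O[atTop] fun x : ℝ => x ^ K')

/-- Asymptotic risk `η̄(Ω) = ∫₀^∞ φ(ν) L(Ω/ν) dν`. -/
noncomputable def abar (r : ℕ) (L : ℝ → ℝ) (Ω : ℝ) : ℝ :=
  ∫ ν in Set.Ioi (0 : ℝ), phi r ν * L (Ω / ν)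

/-- Risk of the non-randomized estimator `p̂ = g(N)`:
`η(p) = Σ_{n=r}^∞ f(n) L(g(n)/p)`. -/
noncomputable def riskNR (r : ℕ) (L : ℝ → ℝ) (g : ℕ → ℝ) (p : ℝ) : ℝ :=
  ∑' n : ℕ, fpmf r p (n + r) * L (g (n + r) / p)

set_option maxHeartbeats 1000000

lemma exists_global_bound (r : ℕ) (hr : 1 ≤ r) (L : ℝ → ℝ) (hL0 : ∀ x, 0 ≤ L x)
    (h1 : Assumption1 L) (h3 : Assumption3 r L) :
    ∃ C K K' : ℝ, 0 < C ∧ K ≤ 0 ∧ 0 ≤ K' ∧ K' < r ∧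
      ∀ x : ℝ, 0 < x → L x ≤ C * (x ^ K + x ^ K') := by
  obtain ⟨⟨K₀, hK₀⟩, ⟨K₀', hK₀'r, hK₀'⟩⟩ := h3
  have hrpos : (0:ℝ) < r := by exact_mod_cast hr
  -- extract bound near 0
  obtain ⟨c₁, hc₁⟩ := hK₀.bound
  rw [(nhdsGT_basis (0:ℝ)).eventually_iff] at hc₁
  obtain ⟨δ, hδ0, hδ⟩ := hc₁
  set δ₁ : ℝ := min (δ/2) 1 with hδ₁def
  have hδ₁0 : 0 < δ₁ := lt_min (by linarith) one_pos
  have hδ₁1 : δ₁ ≤ 1 := min_le_right _ _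
  -- extract bound at infinity
  obtain ⟨c₂, hc₂⟩ := hK₀'.bound
  rw [eventually_atTop] at hc₂
  obtain ⟨M₀, hM₀⟩ := hc₂
  set M : ℝ := max M₀ (δ₁ + 1) with hMdef
  have hM1 : δ₁ < M := lt_of_lt_of_le (by linarith) (le_max_right _ _)
  have hMpos : 0 < M := lt_trans hδ₁0 hM1
  -- middle bound
  have hbv := h1 δ₁ M hδ₁0 hM1
  set B : ℝ := L δ₁ + (eVariationOn L (Set.Icc δ₁ M)).toReal with hBdef
  have hB0 : 0 ≤ B := add_nonneg (hL0 _) ENNReal.toReal_nonneg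
  have hmid : ∀ x ∈ Set.Icc δ₁ M, L x ≤ B := by
    intro x hx
    have := hbv.dist_le hx (Set.left_mem_Icc.2 hM1.le)
    have h2 : L x - L δ₁ ≤ dist (L x) (L δ₁) := by
      rw [Real.dist_eq]; exact le_abs_self _
    linarith
  set c₁' : ℝ := max c₁ 1 with hc₁'def
  set c₂' : ℝ := max c₂ 1 with hc₂'def
  set C : ℝ := max c₁' (max c₂' (B * M ^ (-(min K₀ 0)) + 1)) with hCdef
  have hC0 : 0 < C := by
    have : (1:ℝ) ≤ c₁' := le_max_right _ _
    have h2 : c₁' ≤ C := le_max_left _ _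
    linarith
  refine ⟨C, min K₀ 0, max K₀' 0, hC0, min_le_right _ _, le_max_right _ _,
    max_lt hK₀'r hrpos, ?_⟩
  intro x hx
  have hxK : (0:ℝ) ≤ x ^ (min K₀ 0) := Real.rpow_nonneg hx.le _
  have hxK' : (0:ℝ) ≤ x ^ (max K₀' 0) := Real.rpow_nonneg hx.le _
  rcases le_or_gt x δ₁ with hle | hgt
  · -- near zero
    have hxδ : x < δ := lt_of_le_of_lt hle (lt_of_le_of_lt (min_le_left _ _) (by linarith))
    have hb := hδ ⟨hx, hxδ⟩
    have h1 : L x ≤ c₁ * x ^ K₀ := by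
      have : ‖L x‖ = L x := Real.norm_of_nonneg (hL0 x)
      have h2 : ‖x ^ K₀‖ = x ^ K₀ := Real.norm_of_nonneg (Real.rpow_nonneg hx.le _)
      rw [this, h2] at hb; exact hb
    have h2 : c₁ * x ^ K₀ ≤ c₁' * x ^ K₀ :=
      mul_le_mul_of_nonneg_right (le_max_left _ _) (Real.rpow_nonneg hx.le _)
    have h3 : x ^ K₀ ≤ x ^ (min K₀ 0) :=
      Real.rpow_le_rpow_of_exponent_ge hx (hle.trans hδ₁1) (min_le_left _ _)
    have h4 : c₁' * x ^ K₀ ≤ C * x ^ (min K₀ 0) := by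
      have hc₁'pos : (0:ℝ) < c₁' := lt_of_lt_of_le one_pos (le_max_right _ _)
      calc c₁' * x ^ K₀ ≤ c₁' * x ^ (min K₀ 0) := mul_le_mul_of_nonneg_left h3 hc₁'pos.le
        _ ≤ C * x ^ (min K₀ 0) := mul_le_mul_of_nonneg_right (le_max_left _ _) hxK
    nlinarith [mul_nonneg hC0.le hxK']
  rcases le_or_gt x M with hle2 | hgt2
  · -- middle
    have hLB := hmid x ⟨hgt.le, hle2⟩
    have hMK : M ^ (min K₀ 0) ≤ x ^ (min K₀ 0) :=
      Real.rpow_le_rpow_of_nonpos hx hle2 (min_le_right _ _)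
    have hMKpos : (0:ℝ) < M ^ (-(min K₀ 0)) := Real.rpow_pos_of_pos hMpos _
    have key : B ≤ (B * M ^ (-(min K₀ 0))) * x ^ (min K₀ 0) := by
      have : B = (B * M ^ (-(min K₀ 0))) * M ^ (min K₀ 0) := by
        rw [mul_assoc, ← Real.rpow_add hMpos]
        simp
      nth_rewrite 1 [this]
      exact mul_le_mul_of_nonneg_left hMK (mul_nonneg hB0 hMKpos.le)
    have hCB : B * M ^ (-(min K₀ 0)) ≤ C :=
      le_trans (by linarith) ((le_max_right _ _).trans (le_max_right _ _))
    have : L x ≤ C * x ^ (min K₀ 0) := by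
      calc L x ≤ B := hLB
        _ ≤ (B * M ^ (-(min K₀ 0))) * x ^ (min K₀ 0) := key
        _ ≤ C * x ^ (min K₀ 0) := mul_le_mul_of_nonneg_right hCB hxK
    nlinarith [mul_nonneg hC0.le hxK']
  · -- at infinity
    have hxM : M₀ ≤ x := le_trans (le_max_left _ _) hgt2.le
    have hb := hM₀ x hxM
    have hx1 : (1:ℝ) ≤ x := le_trans (le_trans (by linarith) (le_max_right M₀ (δ₁+1))) hgt2.le
    have h1 : L x ≤ c₂ * x ^ K₀' := by
      have h0 : ‖L x‖ = L x := Real.norm_of_nonneg (hL0 x)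
      have h2 : ‖x ^ K₀'‖ = x ^ K₀' := Real.norm_of_nonneg (Real.rpow_nonneg hx.le _)
      rw [h0, h2] at hb; exact hb
    have h3 : x ^ K₀' ≤ x ^ (max K₀' 0) :=
      Real.rpow_le_rpow_of_exponent_le hx1 (le_max_left _ _)
    have hc₂'pos : (0:ℝ) < c₂' := lt_of_lt_of_le one_pos (le_max_right _ _)
    have h4 : L x ≤ C * x ^ (max K₀' 0) := by
      calc L x ≤ c₂ * x ^ K₀' := h1
        _ ≤ c₂' * x ^ K₀' := mul_le_mul_of_nonneg_right (le_max_left _ _) (Real.rpow_nonneg hx.le _)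
        _ ≤ c₂' * x ^ (max K₀' 0) := mul_le_mul_of_nonneg_left h3 hc₂'pos.le
        _ ≤ C * x ^ (max K₀' 0) := mul_le_mul_of_nonneg_right
            ((le_max_left _ _).trans (le_max_right _ _)) hxK'
    nlinarith [mul_nonneg hC0.le hxK]

lemma fpmf_div_le (r : ℕ) (hr : 1 ≤ r) {p ν : ℝ} (hp : 0 < p) (hp1 : p < 1) (hν : 0 < ν)
    {n : ℕ} (hn : r ≤ n) (hlow : ν - p ≤ p * n) (hup : p * n ≤ ν) :
    fpmf r p n / p ≤ Real.exp (r + 1) / (Nat.factorial (r - 1)) * (ν ^ (r - 1) * Real.exp (-ν)) := by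
  have hfact : (0:ℝ) < (Nat.factorial (r-1)) := by positivity
  have hprod : (∏ i ∈ Finset.Icc 1 (r - 1), ((n : ℝ) - (i : ℝ))) * p ^ (r-1)
      ≤ ν ^ (r - 1) := by
    have : (∏ i ∈ Finset.Icc 1 (r - 1), ((n : ℝ) - (i : ℝ))) * p ^ (r-1)
        = ∏ i ∈ Finset.Icc 1 (r - 1), (((n : ℝ) - (i : ℝ)) * p) := by
      rw [Finset.prod_mul_distrib, Finset.prod_const, Nat.card_Icc]
      simp
    rw [this]
    calc ∏ i ∈ Finset.Icc 1 (r - 1), (((n : ℝ) - (i : ℝ)) * p)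
        ≤ ∏ i ∈ Finset.Icc 1 (r - 1), ν := by
          apply Finset.prod_le_prod
          · intro i hi
            rw [Finset.mem_Icc] at hi
            have : i ≤ n := le_trans hi.2 (le_trans (Nat.sub_le r 1) hn)
            have := (Nat.cast_le (α := ℝ)).2 this
            nlinarith
          · intro i hi
            rw [Finset.mem_Icc] at hi
            have h1 : ((n:ℝ) - i) * p ≤ n * p := by
              have : (0:ℝ) ≤ i := Nat.cast_nonneg i
              nlinarith
            calc ((n:ℝ) - i) * p ≤ n * p := h1
              _ = p * n := mul_comm _ _
              _ ≤ ν := hup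
      _ = ν ^ (r-1) := by rw [Finset.prod_const, Nat.card_Icc]; simp
  have hgeom : (1 - p) ^ (n - r) ≤ Real.exp (r + 1) * Real.exp (-ν) := by
    have h1 : (1 - p) ^ (n - r) ≤ Real.exp (-p) ^ (n - r) := by
      apply pow_le_pow_left₀ (by linarith)
      have := Real.add_one_le_exp (-p)
      linarith
    have h2 : Real.exp (-p) ^ (n - r) = Real.exp (-(p * (n - r : ℕ))) := by
      rw [← Real.exp_nat_mul]; ring_nf
    have h3 : (-(p * ((n - r : ℕ) : ℝ))) ≤ r + 1 + (-ν) := by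
      have hcast : ((n - r : ℕ) : ℝ) = (n : ℝ) - r := by
        rw [Nat.cast_sub hn]
      rw [hcast]
      have hrp : p * r ≤ r := by
        have : (0:ℝ) ≤ r := Nat.cast_nonneg r
        nlinarith
      have : p * ((n:ℝ) - r) = p * n - p * r := by ring
      nlinarith
    calc (1 - p) ^ (n - r) ≤ Real.exp (-(p * (n - r : ℕ))) := by rw [← h2]; exact h1
      _ ≤ Real.exp (r + 1 + (-ν)) := Real.exp_le_exp.2 h3
      _ = Real.exp (r + 1) * Real.exp (-ν) := Real.exp_add _ _
  have hppow : p ^ r / p = p ^ (r - 1) := by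
    rw [div_eq_iff hp.ne', ← pow_succ]
    congr 1
    omega
  have expand : fpmf r p n / p
      = ((∏ i ∈ Finset.Icc 1 (r - 1), ((n : ℝ) - (i : ℝ))) * p ^ (r-1)) / (Nat.factorial (r-1))
        * (1 - p) ^ (n - r) := by
    unfold fpmf
    field_simp
    ring_nf
    rw [← hppow]
    field_simp
  rw [expand]
  have hprodpos : 0 ≤ (∏ i ∈ Finset.Icc 1 (r - 1), ((n : ℝ) - (i : ℝ))) * p ^ (r-1) := by
    apply mul_nonneg _ (by positivity)
    apply Finset.prod_nonneg
    intro i hi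
    rw [Finset.mem_Icc] at hi
    have : i ≤ n := le_trans hi.2 (le_trans (Nat.sub_le r 1) hn)
    have := (Nat.cast_le (α := ℝ)).2 this
    linarith
  have hgpos : (0:ℝ) ≤ (1-p)^(n-r) := pow_nonneg (by linarith) _
  calc ((∏ i ∈ Finset.Icc 1 (r - 1), ((n : ℝ) - (i : ℝ))) * p ^ (r-1)) / (Nat.factorial (r-1))
        * (1 - p) ^ (n - r)
      ≤ (ν ^ (r-1)) / (Nat.factorial (r-1)) * (Real.exp (r + 1) * Real.exp (-ν)) := by
        have h5 : ((∏ i ∈ Finset.Icc 1 (r - 1), ((n : ℝ) - (i : ℝ))) * p ^ (r-1))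
            / (Nat.factorial (r-1)) ≤ (ν ^ (r-1)) / (Nat.factorial (r-1)) := by gcongr
        exact mul_le_mul h5 hgeom hgpos (by positivity)
      _ = Real.exp (r + 1) / (Nat.factorial (r - 1)) * (ν ^ (r - 1) * Real.exp (-ν)) := by ring

noncomputable def hstep (r : ℕ) (L : ℝ → ℝ) (g : ℕ → ℝ) (p ν : ℝ) : ℝ :=
  if r ≤ ⌊ν / p⌋₊ then fpmf r p ⌊ν / p⌋₊ / p * L (g ⌊ν / p⌋₊ / p) else 0

lemma hstep_measurable (r : ℕ) (L : ℝ → ℝ) (g : ℕ → ℝ) (p : ℝ) :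
    Measurable (hstep r L g p) := by
  have : hstep r L g p =
      (fun n : ℕ => if r ≤ n then fpmf r p n / p * L (g n / p) else 0) ∘
        (fun ν : ℝ => ⌊ν / p⌋₊) := rfl
  rw [this]
  exact measurable_from_top.comp (Nat.measurable_floor.comp (measurable_id.div_const p))

lemma floor_bracket {p ν : ℝ} (hp : 0 < p) (hν : 0 ≤ ν) :
    p * (⌊ν / p⌋₊ : ℝ) ≤ ν ∧ ν < p * ((⌊ν / p⌋₊ : ℝ) + 1) := by
  have h0 : 0 ≤ ν / p := div_nonneg hν hp.le
  constructor
  · have := Nat.floor_le h0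
    calc p * (⌊ν / p⌋₊ : ℝ) ≤ p * (ν / p) := by nlinarith
      _ = ν := by field_simp
  · have := Nat.lt_floor_add_one (ν / p)
    calc ν = p * (ν / p) := by field_simp
      _ < p * ((⌊ν / p⌋₊ : ℝ) + 1) := by nlinarith

-- The L-composition bound
lemma L_comp_bound (r : ℕ) (hr : 1 ≤ r) (L : ℝ → ℝ) (g : ℕ → ℝ)
    (C K K' : ℝ) (hC : 0 < C) (hK : K ≤ 0) (hK' : 0 ≤ K')
    (hLb : ∀ x : ℝ, 0 < x → L x ≤ C * (x ^ K + x ^ K'))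
    (Ω : ℝ) (hΩ : 0 < Ω) (N0 : ℕ) (hN0r : r + 2 ≤ N0)
    (hN : ∀ n : ℕ, N0 ≤ n → Ω/2 ≤ (n : ℝ) * g n ∧ (n:ℝ) * g n ≤ 2*Ω)
    (hgpos : ∀ n, r ≤ n → 0 < g n) :
    ∃ D : ℝ, 0 < D ∧ ∀ p ∈ Set.Ioo (0:ℝ) 1, ∀ ν : ℝ, 0 < ν → ∀ n : ℕ, r ≤ n →
      p * n ≤ ν → ν < p * (n+1) →
      L (g n / p) ≤ D * (ν ^ (-K) + 1 + ν ^ (-K')) := by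
  have hne : (Finset.Icc r N0).Nonempty := by
    rw [Finset.nonempty_Icc]; omega
  set m : ℝ := (Finset.Icc r N0).inf' hne g with hm
  set M0 : ℝ := (Finset.Icc r N0).sup' hne g with hM0
  have hmpos : 0 < m := by
    rw [hm, Finset.lt_inf'_iff]
    intro i hi
    rw [Finset.mem_Icc] at hi
    exact hgpos i hi.1
  have hM0m : m ≤ M0 := by
    obtain ⟨i, hi⟩ := hne
    exact le_trans (Finset.inf'_le g hi) (Finset.le_sup' g hi)
  have hM0pos : 0 < M0 := lt_of_lt_of_le hmpos hM0m
  set D : ℝ := C * ((Ω/2) ^ K + m ^ K + (4*Ω) ^ K' + M0 ^ K' * ((N0:ℝ)+1) ^ K' + 1) with hD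
  have t1 : 0 ≤ (Ω/2) ^ K := Real.rpow_nonneg (by linarith) _
  have t2 : 0 ≤ m ^ K := Real.rpow_nonneg hmpos.le _
  have t3 : 0 ≤ (4*Ω) ^ K' := Real.rpow_nonneg (by linarith) _
  have t4 : 0 ≤ M0 ^ K' * ((N0:ℝ)+1) ^ K' := by
    apply mul_nonneg (Real.rpow_nonneg hM0pos.le _) (Real.rpow_nonneg (by positivity) _)
  refine ⟨D, by positivity, ?_⟩
  rintro p ⟨hp, hp1⟩ ν hν n hn hnl hnu
  have hgn : 0 < g n := hgpos n hn
  have hgp : 0 < g n / p := div_pos hgn hp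
  have hnν : 0 < (n:ℝ) := by
    have : 1 ≤ n := le_trans hr hn
    exact_mod_cast Nat.lt_of_lt_of_le Nat.zero_lt_one this
  have hνK : 0 ≤ ν ^ (-K) := Real.rpow_nonneg hν.le _
  have hνK' : 0 ≤ ν ^ (-K') := Real.rpow_nonneg hν.le _
  have hbase : L (g n / p) ≤ C * ((g n / p) ^ K + (g n / p) ^ K') := hLb _ hgp
  have hνKrw : ν ^ (-K) = (ν ^ K)⁻¹ := Real.rpow_neg hν.le K
  have key : (g n / p) ^ K + (g n / p) ^ K' ≤
      (Ω/2) ^ K * ν ^ (-K) + m ^ K + ((4*Ω) ^ K' + M0 ^ K' * ((N0:ℝ)+1) ^ K') * ν ^ (-K') := by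
    rcases le_or_gt N0 n with hcase | hcase
    · -- large n
      obtain ⟨hng1, hng2⟩ := hN n hcase
      have hlow : (Ω/2) / ν ≤ g n / p := by
        have h1 : (Ω/2) / ν ≤ (Ω/2) / (p * n) := by
          apply div_le_div_of_nonneg_left (by linarith) (by positivity) hnl
        have h2 : (Ω/2) / (p * n) ≤ g n / p := by
          rw [div_le_div_iff₀ (by positivity) hp]
          calc Ω / 2 * p ≤ ((n:ℝ) * g n) * p := by nlinarith
            _ = g n * (p * n) := by ring
        linarith
      have hup : g n / p ≤ (4*Ω) / ν := by
        have hpn : ν / 2 < p * n := by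
          have : (n:ℝ) + 1 ≤ 2 * n := by
            have : (1:ℝ) ≤ n := by exact_mod_cast le_trans hr hn
            linarith
          nlinarith
        rw [div_le_div_iff₀ hp hν]
        calc g n * ν ≤ g n * (2 * (p * n)) := by
              apply mul_le_mul_of_nonneg_left (by linarith) hgn.le
          _ = ((n:ℝ) * g n) * (2*p) := by ring
          _ ≤ (2*Ω) * (2*p) := by
              apply mul_le_mul_of_nonneg_right hng2 (by linarith)
          _ = 4*Ω*p := by ring
      have e1 : (g n / p) ^ K ≤ ((Ω/2) / ν) ^ K :=
        Real.rpow_le_rpow_of_nonpos (by positivity) hlow hK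
      have e2 : (g n / p) ^ K' ≤ ((4*Ω) / ν) ^ K' :=
        Real.rpow_le_rpow hgp.le hup hK'
      have e1' : ((Ω/2) / ν) ^ K = (Ω/2) ^ K * ν ^ (-K) := by
        rw [Real.div_rpow (by linarith) hν.le, hνKrw, div_eq_mul_inv]
      have e2' : ((4*Ω) / ν) ^ K' = (4*Ω) ^ K' * ν ^ (-K') := by
        rw [Real.div_rpow (by linarith) hν.le, Real.rpow_neg hν.le, div_eq_mul_inv]
      rw [e1'] at e1
      rw [e2'] at e2
      have : (4*Ω) ^ K' * ν ^ (-K') ≤ ((4*Ω) ^ K' + M0 ^ K' * ((N0:ℝ)+1) ^ K') * ν ^ (-K') := by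
        apply mul_le_mul_of_nonneg_right (by linarith) hνK'
      linarith
    · -- small n
      have hmem : n ∈ Finset.Icc r N0 := Finset.mem_Icc.2 ⟨hn, hcase.le⟩
      have hml : m ≤ g n := Finset.inf'_le g hmem
      have hMu : g n ≤ M0 := Finset.le_sup' g hmem
      have e1 : (g n / p) ^ K ≤ m ^ K := by
        have hm2 : m ≤ m / p := by
          rw [le_div_iff₀ hp]; nlinarith
        have hm3 : m / p ≤ g n / p := by gcongr
        exact Real.rpow_le_rpow_of_nonpos hmpos (by linarith) hK
      have e2 : (g n / p) ^ K' ≤ M0 ^ K' * ((N0:ℝ)+1) ^ K' * ν ^ (-K') := by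
        have hub : g n / p ≤ M0 * ((N0:ℝ)+1) / ν := by
          rw [div_le_div_iff₀ hp hν]
          have hνp : ν ≤ p * ((N0:ℝ)+1) := by
            have hcast : (n:ℝ) + 1 ≤ (N0:ℝ) + 1 := by
              have : (n:ℝ) ≤ N0 := by exact_mod_cast hcase.le
              linarith
            nlinarith
          calc g n * ν ≤ M0 * ν := mul_le_mul_of_nonneg_right hMu hν.le
            _ ≤ M0 * (p * ((N0:ℝ)+1)) := mul_le_mul_of_nonneg_left hνp hM0pos.le
            _ = M0 * ((N0:ℝ)+1) * p := by ring
        calc (g n / p) ^ K' ≤ (M0 * ((N0:ℝ)+1) / ν) ^ K' :=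
              Real.rpow_le_rpow hgp.le hub hK'
          _ = M0 ^ K' * ((N0:ℝ)+1) ^ K' * ν ^ (-K') := by
            rw [Real.div_rpow (by positivity) hν.le, Real.mul_rpow hM0pos.le (by positivity),
              Real.rpow_neg hν.le, div_eq_mul_inv]
      have hc1 : 0 ≤ (Ω/2) ^ K * ν ^ (-K) := mul_nonneg t1 hνK
      have h4' : M0 ^ K' * ((N0:ℝ)+1) ^ K' * ν ^ (-K') ≤
          ((4*Ω) ^ K' + M0 ^ K' * ((N0:ℝ)+1) ^ K') * ν ^ (-K') :=
        mul_le_mul_of_nonneg_right (by linarith) hνK'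
      linarith
  calc L (g n / p) ≤ C * ((g n / p) ^ K + (g n / p) ^ K') := hbase
    _ ≤ C * ((Ω/2) ^ K * ν ^ (-K) + m ^ K + ((4*Ω) ^ K' + M0 ^ K' * ((N0:ℝ)+1) ^ K') * ν ^ (-K')) := by
        apply mul_le_mul_of_nonneg_left key hC.le
    _ ≤ D * (ν ^ (-K) + 1 + ν ^ (-K')) := by
        rw [hD]
        have expand : C * ((Ω/2) ^ K + m ^ K + (4*Ω) ^ K' + M0 ^ K' * ((N0:ℝ)+1) ^ K' + 1)
            * (ν ^ (-K) + 1 + ν ^ (-K'))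
            = C * (((Ω/2) ^ K + m ^ K + (4*Ω) ^ K' + M0 ^ K' * ((N0:ℝ)+1) ^ K' + 1)
              * (ν ^ (-K) + 1 + ν ^ (-K'))) := by ring
        rw [expand]
        apply mul_le_mul_of_nonneg_left _ hC.le
        nlinarith [mul_nonneg t1 hνK', mul_nonneg t2 hνK, mul_nonneg t2 hνK',
          mul_nonneg t3 hνK, mul_nonneg t4 hνK, mul_nonneg (mul_nonneg t4 hνK) hνK',
          mul_nonneg t1 hνK, mul_nonneg t3 hνK', mul_nonneg t4 hνK']

lemma fpmf_nonneg (r : ℕ) {p : ℝ} (hp : 0 < p) (hp1 : p < 1) {n : ℕ} (hn : r ≤ n) :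
    0 ≤ fpmf r p n := by
  unfold fpmf
  have h1 : 0 ≤ ∏ i ∈ Finset.Icc 1 (r - 1), ((n : ℝ) - (i : ℝ)) := by
    apply Finset.prod_nonneg
    intro i hi
    rw [Finset.mem_Icc] at hi
    have : i ≤ n := le_trans hi.2 (le_trans (Nat.sub_le r 1) hn)
    have := (Nat.cast_le (α := ℝ)).2 this
    linarith
  have hp1' : (0:ℝ) ≤ 1 - p := by linarith
  exact mul_nonneg (mul_nonneg (div_nonneg h1 (by positivity)) (by positivity))
    (pow_nonneg hp1' _)

lemma G_integrable (E s₁ s₂ s₃ : ℝ) (h₁ : 0 < s₁) (h₂ : 0 < s₂) (h₃ : 0 < s₃) :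
    IntegrableOn (fun ν : ℝ => E * (Real.exp (-ν) * ν ^ (s₁ - 1) + Real.exp (-ν) * ν ^ (s₂ - 1)
      + Real.exp (-ν) * ν ^ (s₃ - 1))) (Set.Ioi 0) := by
  exact (((Real.GammaIntegral_convergent h₁).add (Real.GammaIntegral_convergent h₂)).add
    (Real.GammaIntegral_convergent h₃)).const_mul E

lemma hstep_le (r : ℕ) (hr : 1 ≤ r) (L : ℝ → ℝ) (hL0 : ∀ x, 0 ≤ L x) (g : ℕ → ℝ)
    (hfd : ∀ {p ν : ℝ}, 0 < p → p < 1 → 0 < ν → ∀ {n : ℕ}, r ≤ n →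
      ν - p ≤ p * n → p * n ≤ ν →
      fpmf r p n / p ≤ Real.exp (r + 1) / (Nat.factorial (r - 1)) * (ν ^ (r - 1) * Real.exp (-ν)))
    (K K' D : ℝ) (hK : K ≤ 0) (hK' : 0 ≤ K') (hD : 0 < D)
    (hbound : ∀ p ∈ Set.Ioo (0:ℝ) 1, ∀ ν : ℝ, 0 < ν → ∀ n : ℕ, r ≤ n →
      p * n ≤ ν → ν < p * (n+1) → L (g n / p) ≤ D * (ν ^ (-K) + 1 + ν ^ (-K')))
    (p : ℝ) (hp : p ∈ Set.Ioo (0:ℝ) 1) (ν : ℝ) (hν : 0 < ν) :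
    hstep r L g p ν ≤ (Real.exp (r+1) / (Nat.factorial (r-1)) * D) *
      (Real.exp (-ν) * ν ^ ((r:ℝ) - K - 1) + Real.exp (-ν) * ν ^ ((r:ℝ) - 1)
        + Real.exp (-ν) * ν ^ ((r:ℝ) - K' - 1)) := by
  obtain ⟨hp0, hp1⟩ := hp
  have hA : (0:ℝ) < Real.exp (r+1) / (Nat.factorial (r-1)) := by positivity
  have hRHS : 0 ≤ (Real.exp (r+1) / (Nat.factorial (r-1)) * D) *
      (Real.exp (-ν) * ν ^ ((r:ℝ) - K - 1) + Real.exp (-ν) * ν ^ ((r:ℝ) - 1)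
        + Real.exp (-ν) * ν ^ ((r:ℝ) - K' - 1)) := by
    apply mul_nonneg (mul_nonneg hA.le hD.le)
    have e1 : (0:ℝ) ≤ Real.exp (-ν) * ν ^ ((r:ℝ) - K - 1) :=
      mul_nonneg (Real.exp_nonneg _) (Real.rpow_nonneg hν.le _)
    have e2 : (0:ℝ) ≤ Real.exp (-ν) * ν ^ ((r:ℝ) - 1) :=
      mul_nonneg (Real.exp_nonneg _) (Real.rpow_nonneg hν.le _)
    have e3 : (0:ℝ) ≤ Real.exp (-ν) * ν ^ ((r:ℝ) - K' - 1) :=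
      mul_nonneg (Real.exp_nonneg _) (Real.rpow_nonneg hν.le _)
    linarith
  unfold hstep
  split_ifs with hif
  · set n := ⌊ν / p⌋₊ with hn
    obtain ⟨hbl, hbu⟩ := floor_bracket hp0 hν.le
    have hnl : p * (n:ℝ) ≤ ν := hbl
    have hnu : ν < p * ((n:ℝ)+1) := hbu
    have hf := hfd hp0 hp1 hν hif (by nlinarith) hnl
    have hLB := hbound p ⟨hp0, hp1⟩ ν hν n hif hnl hnu
    have hfn : 0 ≤ fpmf r p n / p := div_nonneg (fpmf_nonneg r hp0 hp1 hif) hp0.le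
    have step : fpmf r p n / p * L (g n / p) ≤
        (Real.exp (r+1) / (Nat.factorial (r-1)) * (ν ^ (r - 1) * Real.exp (-ν))) *
          (D * (ν ^ (-K) + 1 + ν ^ (-K'))) := by
      apply mul_le_mul hf hLB (hL0 _) _
      positivity
    refine le_trans step (le_of_eq ?_)
    have hpow : (ν:ℝ) ^ (r-1) = ν ^ ((r:ℝ) - 1) := by
      rw [← Real.rpow_natCast ν (r-1), Nat.cast_sub hr, Nat.cast_one]
    have m1 : ν ^ ((r:ℝ) - K - 1) = ν ^ ((r:ℝ)-1) * ν ^ (-K) := by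
      rw [← Real.rpow_add hν]; congr 1; ring
    have m2 : ν ^ ((r:ℝ) - K' - 1) = ν ^ ((r:ℝ)-1) * ν ^ (-K') := by
      rw [← Real.rpow_add hν]; congr 1; ring
    rw [hpow, m1, m2]; ring
  · exact hRHS

lemma log_one_sub_div : Tendsto (fun p : ℝ => Real.log (1 - p) / p) (𝓝[>] 0) (𝓝 (-1)) := by
  have hd : HasDerivAt (fun x : ℝ => Real.log (1 - x)) (-1) 0 := by
    have h1 : HasDerivAt (fun x : ℝ => 1 - x) (-1) 0 := by
      have := (hasDerivAt_const (0:ℝ) (1:ℝ)).sub (hasDerivAt_id' 0); simp only [zero_sub] at this; exact this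
    have h2 : HasDerivAt Real.log 1 (1 - 0) := by
      simpa using Real.hasDerivAt_log (by norm_num : (1:ℝ) - 0 ≠ 0)
    have := h2.comp 0 h1; simp only [one_mul] at this; exact this
  have := hasDerivAt_iff_tendsto_slope.1 hd
  have hsub : Tendsto (fun p : ℝ => Real.log (1 - p) / p) (𝓝[≠] 0) (𝓝 (-1)) := by
    apply this.congr
    intro p
    simp [slope_def_field, Real.log_one]
  exact hsub.mono_left (nhdsWithin_mono 0 (fun x hx => ne_of_gt hx))

lemma hstep_tendsto (r : ℕ) (hr : 1 ≤ r) (L : ℝ → ℝ) (g : ℕ → ℝ)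
    (Ω : ℝ) (hΩ : 0 < Ω)
    (hlim : Tendsto (fun n : ℕ => (n : ℝ) * g n) atTop (𝓝 Ω))
    (ν : ℝ) (hν : 0 < ν) (hcont : ContinuousAt L (Ω / ν)) :
    Tendsto (fun p : ℝ => hstep r L g p ν) (𝓝[>] (0:ℝ)) (𝓝 (phi r ν * L (Ω / ν))) := by
  set l : Filter ℝ := 𝓝[>] (0:ℝ) with hl
  have hev_pos : ∀ᶠ p in l, 0 < p := eventually_mem_nhdsWithin
  have hev_lt1 : ∀ᶠ p in l, p < 1 := by
    have : Set.Iio (1:ℝ) ∈ 𝓝 (0:ℝ) := Iio_mem_nhds one_pos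
    exact eventually_nhdsWithin_of_eventually_nhds (eventually_of_mem this (fun x hx => hx))
  -- ν / p → ∞
  have hdiv : Tendsto (fun p : ℝ => ν / p) l atTop := by
    have := Tendsto.const_mul_atTop hν tendsto_inv_nhdsGT_zero
    refine this.congr (fun p => ?_)
    rw [div_eq_mul_inv]
  have hfl : Tendsto (fun p : ℝ => ⌊ν / p⌋₊) l atTop := tendsto_nat_floor_atTop.comp hdiv
  have hev_ge : ∀ᶠ p in l, r ≤ ⌊ν / p⌋₊ := hfl.eventually (eventually_ge_atTop r)
  have hev_ge1 : ∀ᶠ p in l, 1 ≤ ⌊ν / p⌋₊ := hfl.eventually (eventually_ge_atTop 1)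
  -- p * ⌊ν/p⌋₊ → ν
  have hA : Tendsto (fun p : ℝ => p * (⌊ν / p⌋₊ : ℝ)) l (𝓝 ν) := by
    have hlow : Tendsto (fun p : ℝ => ν - p) l (𝓝 ν) := by
      have : Tendsto (fun p : ℝ => ν - p) (𝓝 (0:ℝ)) (𝓝 (ν - 0)) :=
        (continuous_const.sub continuous_id).tendsto 0
      simpa using this.mono_left nhdsWithin_le_nhds
    apply tendsto_of_tendsto_of_tendsto_of_le_of_le' hlow tendsto_const_nhds
    · filter_upwards [hev_pos] with p hp
      have := (floor_bracket hp hν.le).2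
      nlinarith
    · filter_upwards [hev_pos] with p hp
      exact (floor_bracket hp hν.le).1
  -- n g n along floor → Ω
  have hB : Tendsto (fun p : ℝ => ((⌊ν / p⌋₊ : ℝ) * g ⌊ν / p⌋₊)) l (𝓝 Ω) :=
    hlim.comp hfl
  -- g(n)/p → Ω/ν
  have hC : Tendsto (fun p : ℝ => g ⌊ν / p⌋₊ / p) l (𝓝 (Ω / ν)) := by
    have hq := hB.div hA hν.ne'
    apply hq.congr'
    filter_upwards [hev_pos, hev_ge1] with p hp hge1
    have hnn : (0:ℝ) < (⌊ν / p⌋₊ : ℝ) := by exact_mod_cast hge1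
    rw [Pi.div_apply, mul_comm p, mul_div_mul_left _ _ hnn.ne']
  have hD : Tendsto (fun p : ℝ => L (g ⌊ν / p⌋₊ / p)) l (𝓝 (L (Ω / ν))) :=
    hcont.tendsto.comp hC
  -- product part → ν ^ (r-1)
  have hprod : Tendsto (fun p : ℝ =>
      ∏ i ∈ Finset.Icc 1 (r-1), (p * (⌊ν / p⌋₊ : ℝ) - p * (i:ℝ))) l (𝓝 (ν ^ (r-1))) := by
    have h1 : Tendsto (fun p : ℝ =>
        ∏ i ∈ Finset.Icc 1 (r-1), (p * (⌊ν / p⌋₊ : ℝ) - p * (i:ℝ))) l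
        (𝓝 (∏ i ∈ Finset.Icc 1 (r-1), ν)) := by
      apply tendsto_finset_prod
      intro i _
      have hpi : Tendsto (fun p : ℝ => p * (i:ℝ)) l (𝓝 0) := by
        have : Tendsto (fun p : ℝ => p * (i:ℝ)) (𝓝 (0:ℝ)) (𝓝 (0 * (i:ℝ))) :=
          (continuous_id.mul continuous_const).tendsto 0
        simpa using this.mono_left nhdsWithin_le_nhds
      simpa using hA.sub hpi
    simpa [Finset.prod_const, Nat.card_Icc] using h1
  -- geometric part → exp (-ν)
  have hgeom : Tendsto (fun p : ℝ => (1 - p) ^ (⌊ν / p⌋₊ - r)) l (𝓝 (Real.exp (-ν))) := by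
    have hexpo : Tendsto (fun p : ℝ =>
        (p * (⌊ν / p⌋₊ : ℝ) - p * (r:ℝ)) * (Real.log (1 - p) / p)) l (𝓝 (-ν)) := by
      have hpr : Tendsto (fun p : ℝ => p * (r:ℝ)) l (𝓝 0) := by
        have : Tendsto (fun p : ℝ => p * (r:ℝ)) (𝓝 (0:ℝ)) (𝓝 (0 * (r:ℝ))) :=
          (continuous_id.mul continuous_const).tendsto 0
        simpa using this.mono_left nhdsWithin_le_nhds
      have := (hA.sub hpr).mul log_one_sub_div
      simpa using this
    have hcomp : Tendsto (fun p : ℝ => Real.exp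
        ((p * (⌊ν / p⌋₊ : ℝ) - p * (r:ℝ)) * (Real.log (1 - p) / p))) l (𝓝 (Real.exp (-ν))) :=
      (Real.continuous_exp.tendsto _).comp hexpo
    apply hcomp.congr'
    filter_upwards [hev_pos, hev_lt1, hev_ge] with p hp hp1 hge
    have h1p : (0:ℝ) < 1 - p := by linarith
    have hcast : ((⌊ν / p⌋₊ - r : ℕ) : ℝ) = (⌊ν / p⌋₊ : ℝ) - (r:ℝ) := by
      rw [Nat.cast_sub hge]
    have harg : (p * (⌊ν / p⌋₊ : ℝ) - p * (r:ℝ)) * (Real.log (1 - p) / p)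
        = ((⌊ν / p⌋₊ - r : ℕ) : ℝ) * Real.log (1 - p) := by
      rw [hcast]
      field_simp
    rw [harg, Real.exp_nat_mul, Real.exp_log h1p]
  -- fpmf part
  have hF : Tendsto (fun p : ℝ => fpmf r p ⌊ν / p⌋₊ / p) l
      (𝓝 (ν ^ (r-1) / (Nat.factorial (r-1)) * Real.exp (-ν))) := by
    have hmain := (hprod.div_const ((Nat.factorial (r-1) : ℝ))).mul hgeom
    apply hmain.congr'
    filter_upwards [hev_pos, hev_ge] with p hp hge
    set n := ⌊ν / p⌋₊ with hn
    have hppow : p ^ r / p = p ^ (r - 1) := by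
      rw [div_eq_iff hp.ne', ← pow_succ]
      congr 1
      omega
    have hprodeq : (∏ i ∈ Finset.Icc 1 (r-1), (p * (n : ℝ) - p * (i:ℝ)))
        = (∏ i ∈ Finset.Icc 1 (r-1), ((n : ℝ) - (i:ℝ))) * p ^ (r-1) := by
      have hcg : ∀ i ∈ Finset.Icc 1 (r-1), p * (n:ℝ) - p * (i:ℝ) = ((n:ℝ) - i) * p := by
        intro i _; ring
      rw [Finset.prod_congr rfl hcg, Finset.prod_mul_distrib, Finset.prod_const, Nat.card_Icc]
      simp
    have expand : fpmf r p n / p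
        = ((∏ i ∈ Finset.Icc 1 (r-1), ((n : ℝ) - (i : ℝ))) * p ^ (r-1)) / (Nat.factorial (r-1))
          * (1 - p) ^ (n - r) := by
      unfold fpmf
      field_simp
      ring_nf
      rw [← hppow]
      field_simp
    rw [hprodeq, expand]
  -- combine
  have hFull := hF.mul hD
  have hval : phi r ν * L (Ω / ν)
      = (ν ^ (r-1) / (Nat.factorial (r-1)) * Real.exp (-ν)) * L (Ω / ν) := by
    unfold phi; ring
  rw [hval]
  apply hFull.congr'
  filter_upwards [hev_ge] with p hge
  unfold hstep
  rw [if_pos hge]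

lemma hstep_hasSum (r : ℕ) (hr : 1 ≤ r) (L : ℝ → ℝ) (g : ℕ → ℝ)
    {p : ℝ} (hp : 0 < p) (hp1 : p < 1)
    (hint : IntegrableOn (hstep r L g p) (Set.Ioi 0)) :
    HasSum (fun n : ℕ => fpmf r p (n + r) * L (g (n + r) / p))
      (∫ ν in Set.Ioi (0:ℝ), hstep r L g p ν) := by
  have hrR : (0:ℝ) < (r:ℝ) := by exact_mod_cast hr
  have hpr : 0 < p * (r:ℝ) := by positivity
  set s : ℕ → Set ℝ := fun n => Set.Ico (p*((n:ℝ)+r)) (p*((n:ℝ)+r+1)) with hs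
  have hms : ∀ n, MeasurableSet (s n) := fun n => measurableSet_Ico
  have hord : ∀ m n : ℕ, m < n → Disjoint (s m) (s n) := by
    intro m n hmn
    rw [hs]
    simp only []
    rw [Set.Ico_disjoint_Ico]
    have h1 : p*((m:ℝ)+r+1) ≤ p*((n:ℝ)+r) := by
      have : (m:ℝ) + 1 ≤ (n:ℝ) := by exact_mod_cast hmn
      nlinarith
    calc min (p*((m:ℝ)+r+1)) (p*((n:ℝ)+r+1)) ≤ p*((m:ℝ)+r+1) := min_le_left _ _
      _ ≤ p*((n:ℝ)+r) := h1
      _ ≤ max (p*((m:ℝ)+r)) (p*((n:ℝ)+r)) := le_max_right _ _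
  have hdisj : Pairwise (Function.onFun Disjoint s) := by
    intro m n hmn
    rcases hmn.lt_or_gt with h | h
    · exact hord m n h
    · exact (hord n m h).symm
  have hunion : (⋃ n, s n) = Set.Ici (p * (r:ℝ)) := by
    ext x
    simp only [Set.mem_iUnion, hs, Set.mem_Ico, Set.mem_Ici]
    constructor
    · rintro ⟨n, h1, h2⟩
      have : p * (r:ℝ) ≤ p * ((n:ℝ)+r) := by
        have : (0:ℝ) ≤ (n:ℝ) := Nat.cast_nonneg n
        nlinarith
      linarith
    · intro hx
      have hx0 : 0 < x := lt_of_lt_of_le hpr hx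
      have hfl : r ≤ ⌊x / p⌋₊ := by
        apply Nat.le_floor
        rw [le_div_iff₀ hp]
        linarith [mul_comm p (r:ℝ)]
      obtain ⟨hbl, hbu⟩ := floor_bracket hp hx0.le
      refine ⟨⌊x / p⌋₊ - r, ?_, ?_⟩
      · have : ((⌊x / p⌋₊ - r : ℕ) : ℝ) + r = (⌊x / p⌋₊ : ℝ) := by
          rw [Nat.cast_sub hfl]; ring
        rw [this]
        linarith [mul_comm p (⌊x / p⌋₊ : ℝ)]
      · have : ((⌊x / p⌋₊ - r : ℕ) : ℝ) + r + 1 = (⌊x / p⌋₊ : ℝ) + 1 := by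
          rw [Nat.cast_sub hfl]; ring
        rw [this]
        linarith
  have hsub : Set.Ici (p * (r:ℝ)) ⊆ Set.Ioi (0:ℝ) := fun x hx => lt_of_lt_of_le hpr hx
  have hintU : IntegrableOn (hstep r L g p) (⋃ n, s n) := by
    rw [hunion]; exact hint.mono_set hsub
  have hsum := hasSum_integral_iUnion hms hdisj hintU
  -- compute each piece
  have hpiece : ∀ n : ℕ, (∫ ν in s n, hstep r L g p ν)
      = fpmf r p (n + r) * L (g (n + r) / p) := by
    intro n
    have hconst : Set.EqOn (hstep r L g p)
        (fun _ => fpmf r p (n+r) / p * L (g (n+r) / p)) (s n) := by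
      intro ν hν
      rw [hs] at hν
      simp only [Set.mem_Ico] at hν
      obtain ⟨hν1, hν2⟩ := hν
      have hν0 : 0 ≤ ν := by
        have : (0:ℝ) ≤ (n:ℝ) := Nat.cast_nonneg n
        nlinarith
      have hfe : ⌊ν / p⌋₊ = n + r := by
        rw [Nat.floor_eq_iff (div_nonneg hν0 hp.le)]
        constructor
        · rw [le_div_iff₀ hp]
          push_cast
          linarith [mul_comm p ((n:ℝ)+r)]
        · rw [div_lt_iff₀ hp]
          push_cast
          linarith [mul_comm p ((n:ℝ)+r+1)]
      unfold hstep
      rw [hfe, if_pos (by omega)]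
    rw [setIntegral_congr_fun (hms n) hconst, setIntegral_const]
    rw [hs]
    simp only [measureReal_def, Real.volume_Ico]
    have : p*((n:ℝ)+r+1) - p*((n:ℝ)+r) = p := by ring
    rw [this, ENNReal.toReal_ofReal hp.le, smul_eq_mul]
    field_simp
  -- split the integral over Ioi 0
  have hzero : (∫ ν in Set.Ioo (0:ℝ) (p * (r:ℝ)), hstep r L g p ν) = 0 := by
    rw [setIntegral_congr_fun measurableSet_Ioo (g := fun _ => (0:ℝ)) ?_, integral_zero]
    intro ν hν
    simp only [Set.mem_Ioo] at hν
    have hlt : ⌊ν / p⌋₊ < r := by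
      rw [Nat.floor_lt (div_nonneg hν.1.le hp.le)]
      rw [div_lt_iff₀ hp]
      linarith [mul_comm p (r:ℝ)]
    unfold hstep
    rw [if_neg (by omega)]
  have hsplit : Set.Ioi (0:ℝ) = Set.Ioo 0 (p * (r:ℝ)) ∪ Set.Ici (p * (r:ℝ)) :=
    (Set.Ioo_union_Ici_eq_Ioi hpr).symm
  have hdisj2 : Disjoint (Set.Ioo (0:ℝ) (p * (r:ℝ))) (Set.Ici (p * (r:ℝ))) := by
    apply Set.disjoint_left.2
    intro x hx hx2
    simp only [Set.mem_Ioo] at hx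
    simp only [Set.mem_Ici] at hx2
    linarith
  have hIoi : (∫ ν in Set.Ioi (0:ℝ), hstep r L g p ν)
      = ∫ ν in Set.Ici (p * (r:ℝ)), hstep r L g p ν := by
    rw [hsplit, setIntegral_union hdisj2 measurableSet_Ici
      (hint.mono_set (fun x hx => hx.1)) (hint.mono_set hsub), hzero, zero_add]
  rw [hIoi, ← hunion]
  have : (fun n : ℕ => fpmf r p (n + r) * L (g (n + r) / p))
      = fun n : ℕ => ∫ ν in s n, hstep r L g p ν := by
    funext n; rw [hpiece n]
  rw [this]
  exact hsum

lemma hstep_nonneg (r : ℕ) (L : ℝ → ℝ) (g : ℕ → ℝ) (hL0 : ∀ x, 0 ≤ L x)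
    {p : ℝ} (hp : 0 < p) (hp1 : p < 1) (ν : ℝ) : 0 ≤ hstep r L g p ν := by
  unfold hstep
  split_ifs with h
  · exact mul_nonneg (div_nonneg (fpmf_nonneg r hp hp1 h) hp.le) (hL0 _)
  · exact le_refl 0

lemma cont_ae (L : ℝ → ℝ) (h2 : Assumption2 L) (Ω : ℝ) (hΩ : 0 < Ω) :
    ∀ᵐ ν ∂(MeasureTheory.volume.restrict (Set.Ioi (0:ℝ))),
      ν ∈ Set.Ioi (0:ℝ) → ContinuousAt L (Ω / ν) := by
  set S : Set ℝ := ⋃ k : ℕ, {x ∈ Set.Icc (1/((k:ℝ)+2)) ((k:ℝ)+2) |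
    ¬ ContinuousWithinAt L (Set.Ioi 0) x} with hS
  have hScnt : S.Countable := by
    apply Set.countable_iUnion
    intro k
    have hk1 : (0:ℝ) < 1/((k:ℝ)+2) := by positivity
    have hk2 : 1/((k:ℝ)+2) < (k:ℝ)+2 := by
      rw [div_lt_iff₀ (by positivity)]
      nlinarith [Nat.cast_nonneg (α := ℝ) k]
    exact (h2 _ _ hk1 hk2).countable
  have hcov : ∀ x : ℝ, 0 < x → x ∉ S → ContinuousAt L x := by
    intro x hx hxS
    obtain ⟨k, hk⟩ := exists_nat_ge (max x (1/x))
    have hk1 : x ≤ (k:ℝ)+2 := le_trans (le_trans (le_max_left _ _) hk) (by linarith)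
    have hk2 : 1/((k:ℝ)+2) ≤ x := by
      rw [div_le_iff₀ (by positivity)]
      have h1x : 1/x ≤ (k:ℝ) := le_trans (le_max_right _ _) hk
      rw [div_le_iff₀ hx] at h1x
      nlinarith
    have hcw : ContinuousWithinAt L (Set.Ioi 0) x := by
      by_contra hcwn
      apply hxS
      rw [hS]
      exact Set.mem_iUnion.2 ⟨k, ⟨⟨hk2, hk1⟩, hcwn⟩⟩
    exact hcw.continuousAt (Ioi_mem_nhds hx)
  set T : Set ℝ := (fun x => Ω / x) '' S with hT
  have hTcnt : T.Countable := hScnt.image _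
  have hae : ∀ᵐ ν ∂(MeasureTheory.volume : Measure ℝ), ν ∉ T := hTcnt.ae_notMem _
  rw [MeasureTheory.ae_restrict_iff' measurableSet_Ioi]
  filter_upwards [hae] with ν hν hν0 _
  simp only [Set.mem_Ioi] at hν0
  have hq : 0 < Ω / ν := div_pos hΩ hν0
  apply hcov _ hq
  intro hmem
  apply hν
  rw [hT]
  refine ⟨Ω / ν, hmem, ?_⟩
  field_simp

/-- Theorem 1: for a non-randomized estimator `g` with
`lim_{n→∞} n g(n) = Ω` finite and nonzero, the risk converges as `p → 0⁺` to the
asymptotic risk `η̄(Ω)`. -/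
theorem stmt0 (r : ℕ) (hr : 1 ≤ r) (L : ℝ → ℝ) (hL0 : ∀ x : ℝ, 0 ≤ L x)
    (h1 : Assumption1 L) (h2 : Assumption2 L) (h3 : Assumption3 r L)
    (g : ℕ → ℝ) (hg : ∀ n : ℕ, r ≤ n → 0 < g n)
    (Ω : ℝ) (hΩ : 0 < Ω)
    (hlim : Tendsto (fun n : ℕ => (n : ℝ) * g n) atTop (𝓝 Ω)) :
    (∀ p ∈ Set.Ioo (0 : ℝ) 1,
        Summable (fun n : ℕ => fpmf r p (n + r) * L (g (n + r) / p))) ∧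
    Tendsto (fun p : ℝ => riskNR r L g p) (𝓝[>] (0 : ℝ)) (𝓝 (abar r L Ω)) := by
  -- global bound on L
  obtain ⟨C, K, K', hC, hK, hK', hK'r, hLb⟩ := exists_global_bound r hr L hL0 h1 h3
  -- control of g
  obtain ⟨N1, hN1⟩ := Metric.tendsto_atTop.1 hlim (Ω/2) (by positivity)
  set N0 : ℕ := max N1 (r+2) with hN0
  have hN0r : r + 2 ≤ N0 := le_max_right _ _
  have hNctl : ∀ n : ℕ, N0 ≤ n → Ω/2 ≤ (n:ℝ) * g n ∧ (n:ℝ) * g n ≤ 2*Ω := by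
    intro n hn
    have := hN1 n (le_trans (le_max_left _ _) hn)
    rw [Real.dist_eq, abs_lt] at this
    constructor <;> linarith
  -- domination of L ∘ g
  obtain ⟨D, hD, hbound⟩ := L_comp_bound r hr L g C K K' hC hK hK' hLb Ω hΩ N0 hN0r hNctl hg
  -- the dominating function
  set E : ℝ := Real.exp (r+1) / (Nat.factorial (r-1)) * D with hE
  set G : ℝ → ℝ := fun ν => E * (Real.exp (-ν) * ν ^ ((r:ℝ) - K - 1)
    + Real.exp (-ν) * ν ^ ((r:ℝ) - 1) + Real.exp (-ν) * ν ^ ((r:ℝ) - K' - 1)) with hG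
  have hrR : (0:ℝ) < (r:ℝ) := by exact_mod_cast hr
  have hGint : IntegrableOn G (Set.Ioi 0) := by
    have h₁ : (0:ℝ) < (r:ℝ) - K := by linarith
    have h₃ : (0:ℝ) < (r:ℝ) - K' := by linarith
    have := G_integrable E ((r:ℝ) - K) (r:ℝ) ((r:ℝ) - K') h₁ hrR h₃
    rw [hG]
    exact this
  have hfd : ∀ {p ν : ℝ}, 0 < p → p < 1 → 0 < ν → ∀ {n : ℕ}, r ≤ n →
      ν - p ≤ p * n → p * n ≤ ν →
      fpmf r p n / p ≤ Real.exp (r + 1) / (Nat.factorial (r - 1)) * (ν ^ (r - 1) * Real.exp (-ν)) :=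
    fun {p ν} hp hp1 hν {n} hn h1' h2' => fpmf_div_le r hr hp hp1 hν hn h1' h2'
  -- integrability / bound of hstep
  have hstepbd : ∀ p ∈ Set.Ioo (0:ℝ) 1, ∀ ν : ℝ, 0 < ν → hstep r L g p ν ≤ G ν := by
    intro p hp ν hν
    rw [hG, hE]
    exact hstep_le r hr L hL0 g hfd K K' D hK hK' hD hbound p hp ν hν
  have hIntOn : ∀ p ∈ Set.Ioo (0:ℝ) 1, IntegrableOn (hstep r L g p) (Set.Ioi 0) := by
    intro p hp
    apply Integrable.mono' hGint (hstep_measurable r L g p).aestronglyMeasurable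
    rw [MeasureTheory.ae_restrict_iff' measurableSet_Ioi]
    apply MeasureTheory.ae_of_all
    intro ν hν
    rw [Real.norm_of_nonneg (hstep_nonneg r L g hL0 hp.1 hp.2 ν)]
    exact hstepbd p hp ν hν
  have hHasSum : ∀ p ∈ Set.Ioo (0:ℝ) 1,
      HasSum (fun n : ℕ => fpmf r p (n + r) * L (g (n + r) / p))
        (∫ ν in Set.Ioi (0:ℝ), hstep r L g p ν) :=
    fun p hp => hstep_hasSum r hr L g hp.1 hp.2 (hIntOn p hp)
  constructor
  · exact fun p hp => (hHasSum p hp).summable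
  -- DCT
  have hmemIoo : Set.Ioo (0:ℝ) 1 ∈ 𝓝[>] (0:ℝ) := Ioo_mem_nhdsGT_of_mem ⟨le_refl 0, one_pos⟩
  have hDCT : Tendsto (fun p : ℝ => ∫ ν in Set.Ioi (0:ℝ), hstep r L g p ν)
      (𝓝[>] (0:ℝ)) (𝓝 (∫ ν in Set.Ioi (0:ℝ), phi r ν * L (Ω / ν))) := by
    apply MeasureTheory.tendsto_integral_filter_of_dominated_convergence G
    · apply Filter.Eventually.of_forall
      intro p
      exact (hstep_measurable r L g p).aestronglyMeasurable
    · filter_upwards [hmemIoo] with p hp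
      rw [MeasureTheory.ae_restrict_iff' measurableSet_Ioi]
      apply MeasureTheory.ae_of_all
      intro ν hν
      rw [Real.norm_of_nonneg (hstep_nonneg r L g hL0 hp.1 hp.2 ν)]
      exact hstepbd p hp ν hν
    · exact hGint
    · filter_upwards [cont_ae L h2 Ω hΩ,
        MeasureTheory.ae_restrict_mem (measurableSet_Ioi (a := (0:ℝ)))] with ν hν hmem
      exact hstep_tendsto r hr L g Ω hΩ hlim ν hmem (hν hmem)
  have heq : (fun p : ℝ => ∫ ν in Set.Ioi (0:ℝ), hstep r L g p ν) =ᶠ[𝓝[>] (0:ℝ)]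
      (fun p : ℝ => riskNR r L g p) := by
    filter_upwards [hmemIoo] with p hp
    show (∫ ν in Set.Ioi (0:ℝ), hstep r L g p ν) = riskNR r L g p
    unfold riskNR
    exact ((hHasSum p hp).tsum_eq).symm
  unfold abar
  exact Tendsto.congr' heq hDCT
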